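/- The total number of Eulerian circuits (counted with starting edge fixed up to the equivalences described) of a connected 4-regular multigraph with at least one vertex is divisible by 4. -/

import Mathlib

/-- A multigraph presented by half-edges: `θ` is the fixed-point-free involution
pairing the two half-edges of each edge, and `π` assigns each half-edge to its vertex. -/
structure HalfEdgeGraph (V H : Type) where
  θ : H → H
  π : H → V
  θ_invol : ∀ h, θ (θ h) = h
  θ_ne : ∀ h, θ h ≠ h

/-- An Eulerian circuit: a nonempty list of half-edges (each entry `h` is the dart
from `π h` to `π (θ h)`), using each edge exactly once (exactly one of its two
half-edges appears, once), and cyclically consecutive darts match up at vertices. -/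
def HalfEdgeGraph.IsEulerCircuit {V H : Type} (G : HalfEdgeGraph V H) (l : List H) : Prop :=
  l ≠ [] ∧ l.Nodup ∧ (∀ h : H, h ∈ l ↔ G.θ h ∉ l) ∧
    ∀ i : Fin l.length,
      G.π (G.θ (l.get i)) = G.π (l.get ⟨((i : ℕ) + 1) % l.length, Nat.mod_lt _ i.pos⟩)

namespace EC4

open List

variable {V H : Type} (G : HalfEdgeGraph V H)

def Rl : H → H → Prop := fun a b => G.π (G.θ a) = G.π b

def rv (l : List H) : List H := l.reverse.map G.θ

variable {G}

theorem chain'_map {α β : Type} {R : α → α → Prop} (f : β → α) {l : List β} :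
    Chain' R (map f l) ↔ Chain' (fun a b : β => R (f a) (f b)) l := isChain_map f

theorem chain'_reverse {α : Type} {R : α → α → Prop} {l : List α} :
    Chain' R (reverse l) ↔ Chain' (flip R) l := isChain_reverse

theorem chain'_append {α : Type} {R : α → α → Prop} {l₁ l₂ : List α} :
    Chain' R (l₁ ++ l₂) ↔
      Chain' R l₁ ∧ Chain' R l₂ ∧ ∀ x ∈ l₁.getLast?, ∀ y ∈ l₂.head?, R x y := isChain_append

theorem chain'_iff_get {α : Type} {R : α → α → Prop} {l : List α} :
    Chain' R l ↔ ∀ (i : ℕ) (h : i < length l - 1),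
      R (get l ⟨i, by omega⟩) (get l ⟨i + 1, by omega⟩) := by
  show IsChain R l ↔ _
  rw [isChain_iff_getElem]
  constructor
  · intro h i hi; exact h i (by omega)
  · intro h i hi; exact h i (by omega)

lemma θ_inj : Function.Injective G.θ :=
  Function.LeftInverse.injective G.θ_invol

@[simp] lemma mem_rv {x : H} {l : List H} : x ∈ rv G l ↔ G.θ x ∈ l := by
  simp only [rv, mem_map, mem_reverse]
  constructor
  · rintro ⟨a, ha, rfl⟩; rwa [G.θ_invol]
  · intro h; exact ⟨G.θ x, h, G.θ_invol x⟩

@[simp] lemma length_rv (l : List H) : (rv G l).length = l.length := by simp [rv]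

@[simp] lemma rv_nil : rv G [] = [] := rfl

lemma rv_eq_nil_iff {l : List H} : rv G l = [] ↔ l = [] := by
  simp [rv]

lemma rv_rv (l : List H) : rv G (rv G l) = l := by
  simp [rv, map_reverse, map_map, Function.comp_def, G.θ_invol]

lemma rv_append (a b : List H) : rv G (a ++ b) = rv G b ++ rv G a := by
  simp [rv]

lemma nodup_rv {l : List H} (h : l.Nodup) : (rv G l).Nodup :=
  (List.nodup_reverse.mpr h).map θ_inj

lemma head?_rv (l : List H) : (rv G l).head? = l.getLast?.map G.θ := by
  simp [rv, head?_map, head?_reverse]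

lemma getLast?_rv (l : List H) : (rv G l).getLast? = l.head?.map G.θ := by
  rw [← head?_reverse]
  simp [rv, map_reverse, head?_map]

lemma chain'_rv {l : List H} : Chain' (Rl G) (rv G l) ↔ Chain' (Rl G) l := by
  rw [rv, chain'_map, chain'_reverse]
  constructor
  · intro h
    refine h.imp ?_
    intro a b hab
    simpa [flip, Rl, G.θ_invol, eq_comm] using hab
  · intro h
    refine h.imp ?_
    intro a b hab
    simpa [flip, Rl, G.θ_invol, eq_comm] using hab

/-- cyclic chain condition -/
def CC (G : HalfEdgeGraph V H) (l : List H) : Prop :=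
  Chain' (Rl G) l ∧ ∀ x ∈ l.getLast?, ∀ y ∈ l.head?, Rl G x y

lemma ec_iff {l : List H} :
    G.IsEulerCircuit l ↔ l ≠ [] ∧ l.Nodup ∧ (∀ h : H, h ∈ l ↔ G.θ h ∉ l) ∧ CC G l := by
  unfold HalfEdgeGraph.IsEulerCircuit
  refine and_congr_right fun hne => and_congr_right fun _ => and_congr_right fun _ => ?_
  have hlen : 0 < l.length := length_pos_iff.mpr hne
  constructor
  · intro h
    constructor
    · rw [chain'_iff_get]
      intro i hi
      have := h ⟨i, by omega⟩
      simpa [Rl, Nat.mod_eq_of_lt (show i + 1 < l.length by omega)] using this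
    · intro x hx y hy
      simp only [getLast?_eq_getLast hne, head?_eq_head hne, Option.mem_def,
        Option.some_inj] at hx hy
      subst hx; subst hy
      have := h ⟨l.length - 1, by omega⟩
      rw [getLast_eq_getElem, head_eq_getElem]
      simpa [Rl, get_eq_getElem, Nat.sub_add_cancel hlen, Nat.mod_self] using this
  · rintro ⟨hch, hlk⟩ i
    rcases Nat.lt_or_ge ((i : ℕ) + 1) l.length with h1 | h1
    · have := chain'_iff_get.1 hch i (by omega)
      simpa [Rl, Nat.mod_eq_of_lt h1] using this
    · have hi : (i : ℕ) = l.length - 1 := by omega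
      have := hlk (l.getLast hne) (getLast?_eq_getLast hne) (l.head hne) (head?_eq_head hne)
      rw [getLast_eq_getElem, head_eq_getElem] at this
      have e1 : ((i : ℕ) + 1) % l.length = 0 := by
        rw [hi, Nat.sub_add_cancel hlen, Nat.mod_self]
      simp only [Rl] at this
      simp only [get_eq_getElem, hi, Nat.sub_add_cancel hlen, Nat.mod_self]
      exact this
  
lemma cc_swap {X Y : List H} (h : CC G (X ++ Y)) : CC G (Y ++ X) := by
  rcases eq_or_ne X [] with rfl | hX; · simpa using h
  rcases eq_or_ne Y [] with rfl | hY; · simpa using h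
  obtain ⟨hch, hlk⟩ := h
  rw [chain'_append] at hch
  obtain ⟨hcX, hcY, hXY⟩ := hch
  have hlkYX : ∀ x ∈ Y.getLast?, ∀ y ∈ X.head?, Rl G x y := by
    intro x hx y hy
    apply hlk
    · rw [getLast?_append]; simp [getLast?_eq_getLast hY] at hx ⊢; exact hx
    · cases X with
      | nil => exact absurd rfl hX
      | cons a t => simpa using hy
  constructor
  · rw [chain'_append]
    exact ⟨hcY, hcX, hlkYX⟩
  · intro x hx y hy
    apply hXY
    · rw [getLast?_append] at hx; simp [getLast?_eq_getLast hX] at hx ⊢; exact hx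
    · cases Y with
      | nil => exact absurd rfl hY
      | cons a t => simpa using hy

lemma ec_rotate {l : List H} (h : G.IsEulerCircuit l) (n : ℕ) :
    G.IsEulerCircuit (l.rotate n) := by
  rw [ec_iff] at h ⊢
  obtain ⟨hne, hnd, hcmp, hcc⟩ := h
  refine ⟨by simpa using hne, nodup_rotate.mpr hnd, fun x => by simpa using hcmp x, ?_⟩
  rw [← rotate_mod]
  have hle : n % l.length ≤ l.length := (Nat.mod_lt _ (length_pos_iff.mpr hne)).le
  rw [rotate_eq_drop_append_take hle]
  apply cc_swap (G := G) (X := l.take (n % l.length)) (Y := l.drop (n % l.length))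
  rwa [take_append_drop]

lemma ec_rv {l : List H} (h : G.IsEulerCircuit l) : G.IsEulerCircuit (rv G l) := by
  rw [ec_iff] at h ⊢
  obtain ⟨hne, hnd, hcmp, hcc⟩ := h
  refine ⟨by simpa [rv_eq_nil_iff] using hne, nodup_rv hnd, ?_, ?_⟩
  · intro x
    rw [mem_rv, mem_rv, G.θ_invol, hcmp (G.θ x), G.θ_invol]
  · obtain ⟨hch, hlk⟩ := hcc
    refine ⟨chain'_rv.mpr hch, ?_⟩
    intro x hx y hy
    simp only [Option.mem_def] at hx hy
    rw [getLast?_rv, Option.map_eq_some_iff] at hx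
    rw [head?_rv, Option.map_eq_some_iff] at hy
    obtain ⟨a, ha, rfl⟩ := hx
    obtain ⟨b, hb, rfl⟩ := hy
    have := hlk b hb a ha
    simpa [Rl, G.θ_invol, eq_comm] using this


lemma head?_take' {l : List H} {k : ℕ} (hk : 0 < k) : (l.take k).head? = l.head? := by
  cases l with
  | nil => simp
  | cons a t => cases k with
    | zero => omega
    | succ m => simp

lemma head?_append' {A B : List H} (hA : A ≠ []) : (A ++ B).head? = A.head? := by
  cases A with
  | nil => exact absurd rfl hA
  | cons a t => rfl

lemma head?_get' {l : List H} (h : 0 < l.length) : l.head? = some (l.get ⟨0, h⟩) := by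
  cases l with
  | nil => simp at h
  | cons a t => rfl

lemma drop_head?_get {l : List H} {i : ℕ} (h : i < l.length) :
    (l.drop i).head? = some (l.get ⟨i, h⟩) := by
  rw [head?_drop, List.getElem?_eq_getElem h, List.get_eq_getElem]

lemma rot_symm {l m : List H} (h : ∃ n, m = l.rotate n) : ∃ n, l = m.rotate n := by
  obtain ⟨n, rfl⟩ := h
  rcases Nat.eq_zero_or_pos l.length with h0 | h0
  · exact ⟨0, by simp [List.eq_nil_of_length_eq_zero h0]⟩
  refine ⟨l.length - n % l.length, ?_⟩
  rw [List.rotate_rotate, ← List.rotate_mod]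
  have : (n + (l.length - n % l.length)) % l.length = 0 := by
    have h1 : n % l.length < l.length := Nat.mod_lt _ h0
    rw [← Nat.mod_add_mod]
    rcases Nat.eq_zero_or_pos (n % l.length) with h2 | h2
    · simp [h2]
    · rw [Nat.add_sub_cancel' h1.le, Nat.mod_self]
  rw [this, List.rotate_zero]

lemma rot_trans {l m p : List H} (h1 : ∃ n, m = l.rotate n) (h2 : ∃ n, p = m.rotate n) :
    ∃ n, p = l.rotate n := by
  obtain ⟨a, rfl⟩ := h1; obtain ⟨b, rfl⟩ := h2
  exact ⟨a + b, List.rotate_rotate l a b⟩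

lemma cc_links {A B : List H} (h : CC G (A ++ B)) (hA : A ≠ []) (hB : B ≠ []) :
    G.π (G.θ (A.getLast hA)) = G.π (B.head hB) ∧
    G.π (G.θ (B.getLast hB)) = G.π (A.head hA) := by
  obtain ⟨hch, hlk⟩ := h
  rw [chain'_append] at hch
  constructor
  · exact hch.2.2 _ (getLast?_eq_getLast hA) _ (head?_eq_head hB)
  · apply hlk
    · rw [getLast?_append, getLast?_eq_getLast hB]; simp
    · rw [head?_append' hA, head?_eq_head hA]; simp

lemma ec_glue {A B : List H} (h : G.IsEulerCircuit (A ++ B)) (hA : A ≠ []) (hB : B ≠ [])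
    (hv : G.π (A.head hA) = G.π (B.head hB)) :
    G.IsEulerCircuit (A ++ rv G B) := by
  rw [ec_iff] at h ⊢
  obtain ⟨hne, hnd, hcmp, hcc⟩ := h
  rw [nodup_append] at hnd
  obtain ⟨hndA, hndB, hdisj⟩ := hnd
  have hrvB : rv G B ≠ [] := by simpa [rv_eq_nil_iff] using hB
  have hdisj' : ∀ x ∈ A, x ∉ rv G B := by
    intro x hxA hxB
    rw [mem_rv] at hxB
    have h1 : x ∈ A ++ B := mem_append.mpr (Or.inl hxA)
    have h2 : G.θ x ∈ A ++ B := mem_append.mpr (Or.inr hxB)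
    exact (hcmp x).mp h1 h2
  obtain ⟨hl1, hl2⟩ := cc_links hcc hA hB
  refine ⟨by simp [hA], ?_, ?_, ?_⟩
  · rw [nodup_append]
    exact ⟨hndA, nodup_rv hndB, fun x hx b hb hxb => hdisj' x hx (hxb ▸ hb)⟩
  · intro x
    have c1 := hcmp x
    have c2 := hcmp (G.θ x)
    rw [G.θ_invol] at c2
    simp only [mem_append, mem_rv, G.θ_invol] at c1 c2 ⊢
    have d1 : ¬(x ∈ A ∧ x ∈ B) := fun hh => hdisj _ hh.1 _ hh.2 rfl
    have d2 : ¬(G.θ x ∈ A ∧ G.θ x ∈ B) := fun hh => hdisj _ hh.1 _ hh.2 rfl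
    tauto
  · have hccA : Chain' (Rl G) A ∧ Chain' (Rl G) B := by
      have := hcc.1; rw [chain'_append] at this; exact ⟨this.1, this.2.1⟩
    constructor
    · rw [chain'_append]
      refine ⟨hccA.1, chain'_rv.mpr hccA.2, ?_⟩
      intro x hx y hy
      rw [Option.mem_def, getLast?_eq_getLast hA, Option.some_inj] at hx
      rw [Option.mem_def, head?_rv, getLast?_eq_getLast hB, Option.map_some,
        Option.some_inj] at hy
      subst hx; subst hy
      show G.π (G.θ (A.getLast hA)) = G.π (G.θ (B.getLast hB))
      rw [hl1, hl2, hv]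
    · intro x hx y hy
      rw [Option.mem_def, getLast?_append, getLast?_rv, head?_eq_head hB,
        Option.map_some] at hx
      simp only [Option.some_or, Option.some_inj] at hx
      rw [Option.mem_def, head?_append' hA, head?_eq_head hA, Option.some_inj] at hy
      subst hx; subst hy
      show G.π (G.θ (G.θ (B.head hB))) = G.π (A.head hA)
      rw [G.θ_invol, hv]

variable (G) in
/-- canonical decomposition: `l` splits at `k` into two loops at `v`,
with the designated edge `{h0, θ h0}` in the first part. -/
def Dcp (v : V) (h0 : H) (l : List H) (k : ℕ) : Prop :=
  0 < k ∧ k < l.length ∧ (∀ x ∈ l.head?, G.π x = v) ∧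
    (∀ x ∈ (l.drop k).head?, G.π x = v) ∧
    (∀ i, 0 < i → i < k → ∀ x ∈ (l.drop i).head?, G.π x ≠ v) ∧
    (h0 ∈ l.take k ∨ G.θ h0 ∈ l.take k)

variable {v : V} {h0 : H}

lemma dcp_get0 {l : List H} {k : ℕ} (h : Dcp G v h0 l k) (hx : 0 < l.length) :
    G.π (l.get ⟨0, hx⟩) = v :=
  h.2.2.1 _ (by rw [Option.mem_def]; exact head?_get' hx)

lemma dcp_getk {l : List H} {k : ℕ} (h : Dcp G v h0 l k) :
    G.π (l.get ⟨k, h.2.1⟩) = v :=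
  h.2.2.2.1 _ (by rw [Option.mem_def]; exact drop_head?_get h.2.1)

lemma dcp_mid {l : List H} {k : ℕ} (h : Dcp G v h0 l k) {i : ℕ} (hi0 : 0 < i) (hik : i < k)
    (hil : i < l.length) : G.π (l.get ⟨i, hil⟩) ≠ v :=
  h.2.2.2.2.1 i hi0 hik _ (by rw [Option.mem_def]; exact drop_head?_get hil)

lemma dcp_uniq {l : List H} {k k' : ℕ} (h1 : Dcp G v h0 l k) (h2 : Dcp G v h0 l k') :
    k = k' := by
  rcases lt_trichotomy k k' with h | h | h
  · exact absurd (dcp_getk h1) (dcp_mid h2 h1.1 h h1.2.1)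
  · exact h
  · exact absurd (dcp_getk h2) (dcp_mid h1 h2.1 h h2.2.1)

lemma mod_shift {n j : ℕ} (hn : 0 < n) (hj : j < n) : ((j + (n - 1)) % n + 1) % n = j := by
  rw [Nat.mod_add_mod]
  have e : j + (n - 1) + 1 = j + n := by omega
  rw [e, Nat.add_mod_right, Nat.mod_eq_of_lt hj]

lemma mod_shift' {n j : ℕ} (hn : 0 < n) (hj : j < n) : ((j + 1) % n + (n - 1)) % n = j := by
  rw [Nat.mod_add_mod]
  have e : j + 1 + (n - 1) = j + n := by omega
  rw [e, Nat.add_mod_right, Nat.mod_eq_of_lt hj]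

lemma dep_card [Fintype H] {l : List H} (hl : G.IsEulerCircuit l)
    (hv4 : Nat.card {h : H // G.π h = v} = 4) :
    Nat.card {i : Fin l.length // G.π (l.get i) = v} = 2 := by
  classical
  have hn : 0 < l.length := length_pos_iff.mpr hl.1
  have hnd := hl.2.1
  have hcmp := hl.2.2.1
  have hadj := hl.2.2.2
  have hSv : (Finset.univ.filter fun h : H => G.π h = v).card = 4 := by
    rw [← Fintype.card_subtype, ← Nat.card_eq_fintype_card]; exact hv4
  have hsum :
      ((Finset.univ.filter fun h : H => G.π h = v).filter (· ∈ l)).card +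
      ((Finset.univ.filter fun h : H => G.π h = v).filter (¬ · ∈ l)).card = 4 := by
    rw [Finset.card_filter_add_card_filter_not]; exact hSv
  have hdep : (Finset.univ.filter fun i : Fin l.length => G.π (l.get i) = v).card
      = ((Finset.univ.filter fun h : H => G.π h = v).filter (· ∈ l)).card := by
    apply Finset.card_bij (fun a _ => l.get a)
    · intro a ha
      simp only [Finset.mem_filter, Finset.mem_univ, true_and] at ha ⊢
      exact ⟨ha, l.get_mem _⟩
    · intro a₁ _ a₂ _ hh
      exact (hnd.get_inj_iff).mp hh
    · intro b hb
      simp only [Finset.mem_filter, Finset.mem_univ, true_and] at hb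
      obtain ⟨i, hi⟩ := List.mem_iff_get.mp hb.2
      refine ⟨i, ?_, hi⟩
      simp only [Finset.mem_filter, Finset.mem_univ, true_and]
      show G.π (l.get i) = v
      rw [hi]; exact hb.1
  have harr : (Finset.univ.filter fun i : Fin l.length => G.π (G.θ (l.get i)) = v).card
      = ((Finset.univ.filter fun h : H => G.π h = v).filter (¬ · ∈ l)).card := by
    apply Finset.card_bij (fun a _ => G.θ (l.get a))
    · intro a ha
      simp only [Finset.mem_filter, Finset.mem_univ, true_and] at ha ⊢
      exact ⟨ha, (hcmp (l.get a)).mp (l.get_mem _)⟩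
    · intro a₁ _ a₂ _ hh
      exact (hnd.get_inj_iff).mp (θ_inj hh)
    · intro b hb
      simp only [Finset.mem_filter, Finset.mem_univ, true_and] at hb
      have hbl : G.θ b ∈ l := by
        by_contra hc
        exact hb.2 ((hcmp b).mpr hc)
      obtain ⟨i, hi⟩ := List.mem_iff_get.mp hbl
      refine ⟨i, ?_, by rw [hi, G.θ_invol]⟩
      simp only [Finset.mem_filter, Finset.mem_univ, true_and]
      show G.π (G.θ (l.get i)) = v
      rw [hi, G.θ_invol]; exact hb.1
  have hda : (Finset.univ.filter fun i : Fin l.length => G.π (G.θ (l.get i)) = v).card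
      = (Finset.univ.filter fun i : Fin l.length => G.π (l.get i) = v).card := by
    refine Finset.card_bij'
      (i := fun a _ => (⟨((a : ℕ) + 1) % l.length, Nat.mod_lt _ hn⟩ : Fin l.length))
      (j := fun a _ => (⟨((a : ℕ) + (l.length - 1)) % l.length, Nat.mod_lt _ hn⟩ : Fin l.length))
      ?_ ?_ ?_ ?_
    · intro a ha
      simp only [Finset.mem_filter, Finset.mem_univ, true_and] at ha ⊢
      rw [← hadj a]; exact ha
    · intro a ha
      simp only [Finset.mem_filter, Finset.mem_univ, true_and] at ha ⊢
      have e3 : ∀ j : Fin l.length, (j : ℕ) = (a : ℕ) → G.π (l.get j) = v := by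
        intro j hj
        have : j = a := Fin.ext hj
        rwa [this]
      rw [hadj ⟨((a : ℕ) + (l.length - 1)) % l.length, Nat.mod_lt _ hn⟩]
      exact e3 _ (mod_shift hn a.isLt)
    · intro a _
      exact Fin.ext (mod_shift' hn a.isLt)
    · intro a _
      exact Fin.ext (mod_shift hn a.isLt)
  rw [Nat.card_eq_fintype_card, Fintype.card_subtype]
  omega

lemma dep_exists [Fintype H] {l : List H} (hl : G.IsEulerCircuit l)
    (hv4 : Nat.card {h : H // G.π h = v} = 4) :
    ∃ a b : Fin l.length, a ≠ b ∧ G.π (l.get a) = v ∧ G.π (l.get b) = v := by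
  have hc := dep_card (v := v) hl hv4
  rw [Nat.card_eq_two_iff] at hc
  obtain ⟨x, y, hxy, -⟩ := hc
  exact ⟨x.1, y.1, fun hh => hxy (Subtype.ext hh), x.2, y.2⟩

lemma dep_pair [Fintype H] {l : List H} (hl : G.IsEulerCircuit l)
    (hv4 : Nat.card {h : H // G.π h = v} = 4) {a b : Fin l.length} (hab : a ≠ b)
    (ha : G.π (l.get a) = v) (hb : G.π (l.get b) = v) :
    ∀ i : Fin l.length, G.π (l.get i) = v → i = a ∨ i = b := by
  have hc := dep_card (v := v) hl hv4
  rw [Nat.card_eq_two_iff] at hc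
  obtain ⟨x, y, hxy, hset⟩ := hc
  intro i hi
  have hmem : ∀ z : {i : Fin l.length // G.π (l.get i) = v}, z = x ∨ z = y := by
    intro z
    have : z ∈ ({x, y} : Set _) := hset ▸ Set.mem_univ z
    simpa using this
  have h1 := hmem ⟨a, ha⟩
  have h2 := hmem ⟨b, hb⟩
  have h3 := hmem ⟨i, hi⟩
  rcases h1 with h1 | h1 <;> rcases h2 with h2 | h2
  · exact absurd (congrArg Subtype.val (h1.trans h2.symm)) hab
  · rcases h3 with h3 | h3
    · exact Or.inl (congrArg Subtype.val (h3.trans h1.symm))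
    · exact Or.inr (congrArg Subtype.val (h3.trans h2.symm))
  · rcases h3 with h3 | h3
    · exact Or.inr (congrArg Subtype.val (h3.trans h2.symm))
    · exact Or.inl (congrArg Subtype.val (h3.trans h1.symm))
  · exact absurd (congrArg Subtype.val (h1.trans h2.symm)) hab

lemma get_val_congr {l : List H} {i j : Fin l.length} (h : (i : ℕ) = (j : ℕ)) :
    l.get i = l.get j := by
  congr 1
  exact Fin.ext h

lemma dcp_of_get {l : List H} {k : ℕ} (hk0 : 0 < k) (hklen : k < l.length)
    (hh : G.π (l.get ⟨0, by omega⟩) = v) (hkk : G.π (l.get ⟨k, hklen⟩) = v)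
    (hmid : ∀ i (hi : i < l.length), 0 < i → i < k → G.π (l.get ⟨i, hi⟩) ≠ v)
    (hd : h0 ∈ l.take k ∨ G.θ h0 ∈ l.take k) : Dcp G v h0 l k := by
  refine ⟨hk0, hklen, ?_, ?_, ?_, hd⟩
  · intro x hx
    rw [Option.mem_def, head?_get' (by omega)] at hx
    injection hx with hx
    rw [← hx]; exact hh
  · intro x hx
    rw [Option.mem_def, drop_head?_get hklen] at hx
    injection hx with hx
    rw [← hx]; exact hkk
  · intro i hi0 hik x hx
    rw [Option.mem_def, drop_head?_get (by omega : i < l.length)] at hx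
    injection hx with hx
    rw [← hx]; exact hmid i (by omega) hi0 hik

lemma wd [Fintype H] (hv4 : Nat.card {h : H // G.π h = v} = 4) {l m : List H} {k k' : ℕ}
    (hl : G.IsEulerCircuit l) (hrot : ∃ n, m = l.rotate n)
    (h1 : Dcp G v h0 l k) (h2 : Dcp G v h0 m k') : l = m ∧ k = k' := by
  obtain ⟨n, rfl⟩ := hrot
  have hn : 0 < l.length := length_pos_iff.mpr hl.1
  have hm : G.IsEulerCircuit (l.rotate n) := ec_rotate hl n
  have hlenr : (l.rotate n).length = l.length := l.length_rotate n
  have hlk : k < l.length := h1.2.1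
  have hkpos : 0 < k := h1.1
  have hk0 : (⟨0, hn⟩ : Fin l.length) ≠ ⟨k, hlk⟩ := by
    intro hh
    have := congrArg Fin.val hh
    simp only [Fin.val_mk] at this
    omega
  have hpair := dep_pair hl hv4 hk0 (dcp_get0 h1 hn) (dcp_getk h1)
  have hn' : n % l.length < l.length := Nat.mod_lt _ hn
  have hrg : (l.rotate n).get ⟨0, by rw [hlenr]; exact hn⟩ = l.get ⟨n % l.length, hn'⟩ := by
    rw [List.get_rotate]
    exact get_val_congr (by simp)
  have hdep0 : G.π (l.get ⟨n % l.length, hn'⟩) = v := by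
    rw [← hrg]; exact dcp_get0 h2 (by rw [hlenr]; exact hn)
  rcases hpair _ hdep0 with hcase | hcase
  · have h0' : n % l.length = 0 := congrArg Fin.val hcase
    have hml : l.rotate n = l := by rw [← List.rotate_mod, h0', List.rotate_zero]
    rw [hml] at h2
    exact ⟨hml.symm, dcp_uniq h1 h2⟩
  · exfalso
    have hkk : n % l.length = k := congrArg Fin.val hcase
    have hml : l.rotate n = l.rotate k := by rw [← List.rotate_mod, hkk]
    have hmod : n ≡ k [MOD l.length] := by
      show n % l.length = k % l.length
      rw [hkk, Nat.mod_eq_of_lt hlk]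
    have hsub : l.length - k < l.length := by omega
    have hr2 : (l.rotate n).get ⟨l.length - k, by rw [hlenr]; exact hsub⟩
        = l.get ⟨0, hn⟩ := by
      rw [List.get_rotate]
      apply get_val_congr
      show (l.length - k + n) % l.length = 0
      have := (Nat.ModEq.add_left (l.length - k) hmod)
      rw [Nat.ModEq] at this
      rw [this, Nat.sub_add_cancel hlk.le, Nat.mod_self]
    have hd2 : G.π ((l.rotate n).get ⟨l.length - k, by rw [hlenr]; exact hsub⟩) = v := by
      rw [hr2]; exact dcp_get0 h1 hn
    have hm0k' : (⟨0, by rw [hlenr]; exact hn⟩ : Fin (l.rotate n).length) ≠ ⟨k', h2.2.1⟩ := by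
      intro hh
      have := congrArg Fin.val hh
      simp only [Fin.val_mk] at this
      have := h2.1
      omega
    have hpair2 := dep_pair hm hv4 hm0k' (dcp_get0 h2 (by rw [hlenr]; exact hn)) (dcp_getk h2)
    rcases hpair2 ⟨l.length - k, by rw [hlenr]; exact hsub⟩ hd2 with hc2 | hc2
    · have := congrArg Fin.val hc2
      simp only [Fin.val_mk] at this
      omega
    · have hk' : l.length - k = k' := congrArg Fin.val hc2
      have hmtk : (l.rotate n).take k' = l.drop k := by
        rw [hml, List.rotate_eq_drop_append_take hlk.le,
          List.take_left' (by rw [List.length_drop]; omega)]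
      have hd1 := h1.2.2.2.2.2
      have hd2' := h2.2.2.2.2.2
      rw [hmtk] at hd2'
      have hnd := hl.2.1
      have hdisj : ∀ x, x ∈ l.take k → x ∈ l.drop k → False := by
        have h := hnd
        rw [← List.take_append_drop k l, List.nodup_append] at h
        exact fun x hx hy => h.2.2 _ hx _ hy rfl
      have hcmp := hl.2.2.1
      rcases hd1 with hA | hA <;> rcases hd2' with hB | hB
      · exact hdisj _ hA hB
      · exact (hcmp h0).mp (List.take_subset _ _ hA) (List.drop_subset _ _ hB)
      · exact (hcmp h0).mp (List.drop_subset _ _ hB) (List.take_subset _ _ hA)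
      · exact hdisj _ hA hB

lemma exists_dcp [Fintype H] (hv4 : Nat.card {h : H // G.π h = v} = 4) {l : List H}
    (hl : G.IsEulerCircuit l) : ∃ n k, Dcp G v h0 (l.rotate n) k := by
  classical
  have hn : 0 < l.length := length_pos_iff.mpr hl.1
  obtain ⟨a, b, hab, ha, hb⟩ := dep_exists (v := v) hl hv4
  have hl1 : G.IsEulerCircuit (l.rotate (a : ℕ)) := ec_rotate hl a
  have hlen1 : (l.rotate (a : ℕ)).length = l.length := l.length_rotate a
  have hn1 : 0 < (l.rotate (a : ℕ)).length := by omega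
  have h01 : G.π ((l.rotate (a : ℕ)).get ⟨0, hn1⟩) = v := by
    rw [List.get_rotate]
    rw [get_val_congr (j := a) (by simp [Nat.mod_eq_of_lt a.isLt])]
    exact ha
  obtain ⟨a', b', hab', ha', hb'⟩ := dep_exists (v := v) hl1 hv4
  have hj : ∃ j : Fin (l.rotate (a : ℕ)).length, (j : ℕ) ≠ 0 ∧
      G.π ((l.rotate (a : ℕ)).get j) = v := by
    by_cases hz : (a' : ℕ) = 0
    · refine ⟨b', ?_, hb'⟩
      intro hh
      exact hab' (Fin.ext (by omega))
    · exact ⟨a', hz, ha'⟩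
  obtain ⟨j, hj0, hjv⟩ := hj
  have hne0j : (⟨0, hn1⟩ : Fin (l.rotate (a : ℕ)).length) ≠ j := by
    intro hh
    exact hj0 (congrArg Fin.val hh).symm
  have hpair := dep_pair hl1 hv4 hne0j h01 hjv
  have hx1 : (if h0 ∈ l then h0 else G.θ h0) ∈ l.rotate (a : ℕ) := by
    by_cases hmem : h0 ∈ l
    · simp [hmem, List.mem_rotate]
    · have hθ : G.θ h0 ∈ l := by
        by_contra hc
        exact hmem ((hl.2.2.1 h0).mpr hc)
      simp [hmem, List.mem_rotate, hθ]
  rw [← List.take_append_drop (j : ℕ) (l.rotate (a : ℕ)), List.mem_append] at hx1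
  have hdif : h0 ∈ (l.rotate (a : ℕ)).take (j : ℕ) ∨
        G.θ h0 ∈ (l.rotate (a : ℕ)).take (j : ℕ) →
      (h0 ∈ (l.rotate (a : ℕ)).take (j : ℕ) ∨ G.θ h0 ∈ (l.rotate (a : ℕ)).take (j : ℕ)) :=
    id
  rcases hx1 with hx1 | hx1
  · refine ⟨a, j, ?_⟩
    refine dcp_of_get (Nat.pos_of_ne_zero hj0) j.isLt h01 (by rw [get_val_congr (j := j) rfl]; exact hjv) ?_ ?_
    · intro i hi hi0 hij hvv
      rcases hpair ⟨i, hi⟩ hvv with hc | hc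
      · have := congrArg Fin.val hc
        simp only [Fin.val_mk] at this
        omega
      · have := congrArg Fin.val hc
        simp only [Fin.val_mk] at this
        omega
    · by_cases hmem : h0 ∈ l
      · left; simpa [hmem] using hx1
      · right; simpa [hmem] using hx1
  · refine ⟨(a : ℕ) + (j : ℕ), (l.rotate (a : ℕ)).length - (j : ℕ), ?_⟩
    rw [← List.rotate_rotate]
    have hjlt : (j : ℕ) < (l.rotate (a : ℕ)).length := j.isLt
    have hjpos : 0 < (j : ℕ) := Nat.pos_of_ne_zero hj0
    have hlen2 : ((l.rotate (a : ℕ)).rotate (j : ℕ)).length = (l.rotate (a : ℕ)).length :=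
      (l.rotate (a : ℕ)).length_rotate _
    have hg : ∀ (i : ℕ) (hi : i < (l.rotate (a : ℕ)).length),
        ((l.rotate (a : ℕ)).rotate (j : ℕ)).get ⟨i, by omega⟩ =
          (l.rotate (a : ℕ)).get ⟨(i + (j : ℕ)) % (l.rotate (a : ℕ)).length,
            Nat.mod_lt _ (by omega)⟩ := by
      intro i hi
      rw [List.get_rotate]
    refine dcp_of_get (by omega) (by omega) ?_ ?_ ?_ ?_
    · rw [hg 0 (by omega), get_val_congr (j := j)
        (by simp [Nat.mod_eq_of_lt (show (j : ℕ) < l.length by omega)])]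
      exact hjv
    · have e0 : ((l.rotate (a : ℕ)).length - (j : ℕ) + (j : ℕ)) % (l.rotate (a : ℕ)).length
          = 0 := by
        rw [Nat.sub_add_cancel hjlt.le, Nat.mod_self]
      rw [hg ((l.rotate (a : ℕ)).length - (j : ℕ)) (by omega),
        get_val_congr (j := ⟨0, by omega⟩) (by simpa using e0)]
      exact h01
    · intro i hi hi0 hik hvv
      rw [hg i (by omega), get_val_congr (j := ⟨i + (j : ℕ), by omega⟩)
        (Nat.mod_eq_of_lt (by omega))] at hvv
      rcases hpair ⟨i + (j : ℕ), by omega⟩ hvv with hc | hc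
      · have := congrArg Fin.val hc
        simp only [Fin.val_mk] at this
        omega
      · have := congrArg Fin.val hc
        simp only [Fin.val_mk] at this
        omega
    · have htk : ((l.rotate (a : ℕ)).rotate (j : ℕ)).take ((l.rotate (a : ℕ)).length - (j : ℕ))
          = (l.rotate (a : ℕ)).drop (j : ℕ) := by
        rw [List.rotate_eq_drop_append_take hjlt.le,
          List.take_left' (by rw [List.length_drop])]
      rw [htk]
      by_cases hmem : h0 ∈ l
      · left; simpa [hmem] using hx1
      · right; simpa [hmem] using hx1

lemma rotate_append_left (X Y : List H) : (X ++ Y).rotate X.length = Y ++ X := by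
  rw [List.rotate_eq_drop_append_take (by simp), List.drop_left, List.take_left]

lemma rv_rot (l : List H) (n : ℕ) : ∃ m, rv G (l.rotate n) = (rv G l).rotate m := by
  rcases eq_or_ne l [] with rfl | hne
  · exact ⟨0, by simp⟩
  have hn : 0 < l.length := length_pos_iff.mpr hne
  have hle : n % l.length ≤ l.length := (Nat.mod_lt _ hn).le
  have e1 : rv G (l.rotate n) =
      rv G (l.take (n % l.length)) ++ rv G (l.drop (n % l.length)) := by
    rw [← List.rotate_mod, List.rotate_eq_drop_append_take hle, rv_append]
  have e2 : rv G l = rv G (l.drop (n % l.length)) ++ rv G (l.take (n % l.length)) := by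
    conv_lhs => rw [← List.take_append_drop (n % l.length) l]
    rw [rv_append]
  refine ⟨(rv G (l.drop (n % l.length))).length, ?_⟩
  rw [e1, e2, rotate_append_left]

lemma take_ne_nil' {l : List H} {k : ℕ} (hk : 0 < k) (hkl : k < l.length) :
    l.take k ≠ [] := by
  apply List.ne_nil_of_length_pos
  rw [List.length_take]
  omega

lemma drop_ne_nil' {l : List H} {k : ℕ} (hkl : k < l.length) : l.drop k ≠ [] := by
  apply List.ne_nil_of_length_pos
  rw [List.length_drop]
  omega

lemma dcp_head_take {l : List H} {k : ℕ} (hd : Dcp G v h0 l k)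
    (hA : l.take k ≠ []) : G.π ((l.take k).head hA) = v := by
  apply hd.2.2.1
  rw [Option.mem_def, ← head?_take' hd.1, head?_eq_head hA]

lemma dcp_head_drop {l : List H} {k : ℕ} (hd : Dcp G v h0 l k)
    (hB : l.drop k ≠ []) : G.π ((l.drop k).head hB) = v := by
  apply hd.2.2.2.1
  rw [Option.mem_def, head?_eq_head hB]

lemma glue_ec {l : List H} {k : ℕ} (hl : G.IsEulerCircuit l) (hd : Dcp G v h0 l k) :
    G.IsEulerCircuit (l.take k ++ rv G (l.drop k)) := by
  have hA : l.take k ≠ [] := take_ne_nil' hd.1 hd.2.1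
  have hB : l.drop k ≠ [] := drop_ne_nil' hd.2.1
  apply ec_glue (hA := hA) (hB := hB)
  · rw [List.take_append_drop]; exact hl
  · rw [dcp_head_take hd hA, dcp_head_drop hd hB]

lemma dcp_links {l : List H} {k : ℕ} (hl : G.IsEulerCircuit l) (hd : Dcp G v h0 l k)
    (hA : l.take k ≠ []) (hB : l.drop k ≠ []) :
    G.π (G.θ ((l.take k).getLast hA)) = v ∧ G.π (G.θ ((l.drop k).getLast hB)) = v := by
  have hcc : CC G (l.take k ++ l.drop k) := by
    rw [List.take_append_drop]; exact (ec_iff.mp hl).2.2.2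
  obtain ⟨e1, e2⟩ := cc_links hcc hA hB
  rw [e1, e2, dcp_head_take hd hA, dcp_head_drop hd hB]
  exact ⟨rfl, rfl⟩

lemma len_take_k {l : List H} {k : ℕ} (hd : Dcp G v h0 l k) : (l.take k).length = k := by
  rw [List.length_take]
  have := hd.2.1
  omega

lemma glue_dcp {l : List H} {k : ℕ} (hl : G.IsEulerCircuit l) (hd : Dcp G v h0 l k) :
    Dcp G v h0 (l.take k ++ rv G (l.drop k)) k := by
  have hA : l.take k ≠ [] := take_ne_nil' hd.1 hd.2.1
  have hB : l.drop k ≠ [] := drop_ne_nil' hd.2.1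
  have hlA : (l.take k).length = k := len_take_k hd
  have hdrop : (l.take k ++ rv G (l.drop k)).drop k = rv G (l.drop k) :=
    List.drop_left' hlA
  have htake : (l.take k ++ rv G (l.drop k)).take k = l.take k := List.take_left' hlA
  refine ⟨hd.1, ?_, ?_, ?_, ?_, ?_⟩
  · rw [List.length_append, hlA, length_rv, List.length_drop]
    have h1 := hd.2.1
    have h2 : 0 < l.length - k := by omega
    omega
  · intro x hx
    rw [Option.mem_def, head?_append' hA, head?_take' hd.1] at hx
    exact hd.2.2.1 x hx
  · intro x hx
    rw [hdrop, Option.mem_def, head?_rv, getLast?_eq_getLast hB, Option.map_some,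
      Option.some_inj] at hx
    rw [← hx]
    exact (dcp_links hl hd hA hB).2
  · intro i hi0 hik x hx
    rw [Option.mem_def, head?_drop, List.getElem?_append_left (by omega : i < (l.take k).length),
      List.getElem?_take, if_pos hik, ← head?_drop, ← Option.mem_def] at hx
    exact hd.2.2.2.2.1 i hi0 hik x hx
  · rw [htake]
    exact hd.2.2.2.2.2

lemma rv_dcp {l : List H} {k : ℕ} (hl : G.IsEulerCircuit l) (hd : Dcp G v h0 l k) :
    Dcp G v h0 (rv G (l.take k) ++ rv G (l.drop k)) k := by
  have hA : l.take k ≠ [] := take_ne_nil' hd.1 hd.2.1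
  have hB : l.drop k ≠ [] := drop_ne_nil' hd.2.1
  have hlA : (rv G (l.take k)).length = k := by rw [length_rv]; exact len_take_k hd
  have hrvA : rv G (l.take k) ≠ [] := by
    intro hc
    rw [rv_eq_nil_iff] at hc
    exact hA hc
  have hdrop : (rv G (l.take k) ++ rv G (l.drop k)).drop k = rv G (l.drop k) :=
    List.drop_left' hlA
  have htake : (rv G (l.take k) ++ rv G (l.drop k)).take k = rv G (l.take k) :=
    List.take_left' hlA
  refine ⟨hd.1, ?_, ?_, ?_, ?_, ?_⟩
  · rw [List.length_append, hlA, length_rv, List.length_drop]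
    have h1 := hd.2.1
    omega
  · intro x hx
    rw [Option.mem_def, head?_append' hrvA, head?_rv, getLast?_eq_getLast hA,
      Option.map_some, Option.some_inj] at hx
    rw [← hx]
    exact (dcp_links hl hd hA hB).1
  · intro x hx
    rw [hdrop, Option.mem_def, head?_rv, getLast?_eq_getLast hB, Option.map_some,
      Option.some_inj] at hx
    rw [← hx]
    exact (dcp_links hl hd hA hB).2
  · intro i hi0 hik x hx
    have hkl : k < l.length := hd.2.1
    have hAlen : (l.take k).length = k := len_take_k hd
    rw [Option.mem_def, head?_drop,
      List.getElem?_append_left (by omega : i < (rv G (l.take k)).length),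
      List.getElem?_eq_getElem (by omega : i < (rv G (l.take k)).length)] at hx
    injection hx with hx
    rw [← hx]
    have hilen : i < (map G.θ (l.take k).reverse).length := by
      rw [List.length_map, List.length_reverse, hAlen]; omega
    have hgr : (rv G (l.take k))[i]'(by omega) = G.θ (l[k - 1 - i]'(by omega)) := by
      show (map G.θ (l.take k).reverse)[i]'hilen = _
      rw [List.getElem_map, List.getElem_reverse, List.getElem_take]
      congr 2
      rw [hAlen]
    rw [hgr]
    have hch : Chain' (Rl G) (l.take k) := by
      have hcc : CC G (l.take k ++ l.drop k) := by
        rw [List.take_append_drop]; exact (ec_iff.mp hl).2.2.2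
      have := hcc.1
      rw [chain'_append] at this
      exact this.1
    have hstep := chain'_iff_get.mp hch (k - 1 - i) (by omega)
    simp only [Rl, List.get_eq_getElem, List.getElem_take] at hstep
    rw [hstep]
    have := dcp_mid hd (show 0 < k - 1 - i + 1 by omega) (show k - 1 - i + 1 < k by omega)
      (show k - 1 - i + 1 < l.length by omega)
    rw [List.get_eq_getElem] at this
    exact this
  · rw [htake]
    rcases hd.2.2.2.2.2 with hh | hh
    · right
      rw [mem_rv, G.θ_invol]
      exact hh
    · left
      rw [mem_rv]
      exact hh

end EC4


open Finset in
lemma four_dvd_card {X : Type} [Finite X] (σ τ : X → X)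
    (hσ : ∀ x, σ (σ x) = x) (hτ : ∀ x, τ (τ x) = x)
    (hcomm : ∀ x, σ (τ x) = τ (σ x))
    (h1 : ∀ x, σ x ≠ x) (h2 : ∀ x, τ x ≠ x) (h3 : ∀ x, σ (τ x) ≠ x) :
    4 ∣ Nat.card X := by
  classical
  cases nonempty_fintype X
  have hσinj : Function.Injective σ := Function.LeftInverse.injective hσ
  have hτinj : Function.Injective τ := Function.LeftInverse.injective hτ
  set orb : X → Finset X := fun x => {x, σ x, τ x, σ (τ x)} with horb
  have hmem : ∀ x, x ∈ orb x := by intro x; simp [horb]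
  have hcard : ∀ x, (orb x).card = 4 := by
    intro x
    have d1 : x ≠ σ x := fun h => h1 x h.symm
    have d2 : x ≠ τ x := fun h => h2 x h.symm
    have d3 : x ≠ σ (τ x) := fun h => h3 x h.symm
    have d4 : σ x ≠ τ x := by
      intro h; exact h3 x (by rw [← h, hσ])
    have d5 : σ x ≠ σ (τ x) := fun h => h2 x (hσinj h).symm
    have d6 : τ x ≠ σ (τ x) := fun h => h1 (τ x) h.symm
    simp only [horb]
    rw [Finset.card_insert_of_notMem (by simp [d1, d2, d3]),
      Finset.card_insert_of_notMem (by simp [d4, d5]),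
      Finset.card_insert_of_notMem (by simp [d6]), Finset.card_singleton]
  have horbeq : ∀ x y, y ∈ orb x → orb y = orb x := by
    have key : ∀ x, orb (σ x) = orb x ∧ orb (τ x) = orb x := by
      intro x
      constructor
      · ext a
        simp only [horb, Finset.mem_insert, Finset.mem_singleton, hσ, hcomm, hτ]
        constructor <;> (rintro (h|h|h|h) <;> simp [h, hσ, hτ, hcomm])
      · ext a
        have e1 : σ (τ (τ x)) = σ x := by rw [hτ]
        simp only [horb, Finset.mem_insert, Finset.mem_singleton, hσ, hcomm, hτ, e1]
        constructor <;> (rintro (h|h|h|h) <;> simp [h, hσ, hτ, hcomm])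
    intro x y hy
    simp only [horb, Finset.mem_insert, Finset.mem_singleton] at hy
    rcases hy with h|h|h|h <;> subst h
    · rfl
    · exact (key x).1
    · exact (key x).2
    · rw [(key (τ x)).1, (key x).2]
  rw [Nat.card_eq_fintype_card, ← Finset.card_univ]
  rw [Finset.card_eq_sum_card_fiberwise (f := orb) (t := Finset.univ.image orb)
    (fun x _ => Finset.mem_image_of_mem orb (Finset.mem_univ x))]
  have : ∀ b ∈ Finset.univ.image orb, (Finset.univ.filter fun a => orb a = b).card = 4 := by
    intro b hb
    obtain ⟨x, -, rfl⟩ := Finset.mem_image.mp hb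
    have : (Finset.univ.filter fun a => orb a = orb x) = orb x := by
      ext y
      simp only [Finset.mem_filter, Finset.mem_univ, true_and]
      constructor
      · intro h; rw [← h]; exact hmem y
      · intro h; exact horbeq x y h
    rw [this, hcard]
  rw [Finset.sum_congr rfl this]
  simp [Finset.sum_const, mul_comm]


open EC4 List in
/-- The number of Eulerian circuits of a connected 4-regular multigraph with at least
one vertex, counted as directed closed dart-sequences up to cyclic rotation, is
divisible by 4. -/
theorem stmt11 {V H : Type} [Fintype V] [Fintype H] [Nonempty V] (G : HalfEdgeGraph V H)
    (hconn : ∀ u v : V,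
      Relation.ReflTransGen (fun a b => ∃ h : H, G.π h = a ∧ G.π (G.θ h) = b) u v)
    (hreg : ∀ v : V, Nat.card {h : H // G.π h = v} = 4) :
    4 ∣ Nat.card (Quot (fun l₁ l₂ : {l : List H // G.IsEulerCircuit l} =>
      ∃ n : ℕ, (l₂ : List H) = (l₁ : List H).rotate n)) := by
  classical
  obtain ⟨v⟩ := (inferInstance : Nonempty V)
  have hv4 := hreg v
  have hpos : 0 < Nat.card {h : H // G.π h = v} := by rw [hv4]; norm_num
  obtain ⟨⟨h0, hh0⟩⟩ := (Nat.card_pos_iff.mp hpos).1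
  set rel := fun l₁ l₂ : {l : List H // G.IsEulerCircuit l} =>
      ∃ n : ℕ, (l₂ : List H) = (l₁ : List H).rotate n with hrel
  haveI hfinS : Finite {l : List H // G.IsEulerCircuit l} := by
    have hfin := List.finite_length_le H (Fintype.card H)
    haveI := hfin.to_subtype
    apply Finite.of_injective
      (fun s : {l : List H // G.IsEulerCircuit l} =>
        (⟨s.1, s.2.2.1.length_le_card⟩ : {l : List H | l.length ≤ Fintype.card H}))
    intro a b hab
    have h1 := congrArg Subtype.val hab
    exact Subtype.ext h1
  haveI : Finite (Quot rel) := Quot.finite rel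
  -- the global reversal
  let σf : {l : List H // G.IsEulerCircuit l} → Quot rel :=
    fun s => Quot.mk rel ⟨rv G s.1, ec_rv s.2⟩
  have σresp : ∀ a b, rel a b → σf a = σf b := by
    rintro a b ⟨n, hab⟩
    apply Quot.sound
    show ∃ m, rv G b.1 = (rv G a.1).rotate m
    rw [hab]
    exact rv_rot a.1 n
  let σ : Quot rel → Quot rel := Quot.lift σf σresp
  -- choice of canonical decomposition
  have hex : ∀ s : {l : List H // G.IsEulerCircuit l},
      ∃ nk : ℕ × ℕ, Dcp G v h0 (s.1.rotate nk.1) nk.2 := by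
    intro s
    obtain ⟨n, k, hd⟩ := exists_dcp (v := v) (h0 := h0) hv4 s.2
    exact ⟨(n, k), hd⟩
  let m : {l : List H // G.IsEulerCircuit l} → List H :=
    fun s => s.1.rotate (hex s).choose.1
  let kk : {l : List H // G.IsEulerCircuit l} → ℕ := fun s => (hex s).choose.2
  have hdcp : ∀ s, Dcp G v h0 (m s) (kk s) := fun s => (hex s).choose_spec
  have hmec : ∀ s, G.IsEulerCircuit (m s) := fun s => ec_rotate s.2 _
  have hmrot : ∀ s, ∃ n, m s = s.1.rotate n := fun s => ⟨_, rfl⟩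
  let A : {l : List H // G.IsEulerCircuit l} → List H := fun s => (m s).take (kk s)
  let B : {l : List H // G.IsEulerCircuit l} → List H := fun s => (m s).drop (kk s)
  have hgec : ∀ s, G.IsEulerCircuit (A s ++ rv G (B s)) := fun s => glue_ec (hmec s) (hdcp s)
  let τf : {l : List H // G.IsEulerCircuit l} → Quot rel :=
    fun s => Quot.mk rel ⟨A s ++ rv G (B s), hgec s⟩
  have tau_spec : ∀ (s : {l : List H // G.IsEulerCircuit l}) (m' : List H) (k' : ℕ),
      (∃ n, m' = s.1.rotate n) → Dcp G v h0 m' k' → m s = m' ∧ kk s = k' := by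
    intro s m' k' hr hd'
    exact wd (v := v) (h0 := h0) hv4 (hmec s) (rot_trans (rot_symm (hmrot s)) hr) (hdcp s) hd'
  have τresp : ∀ a b, rel a b → τf a = τf b := by
    intro a b hab
    obtain ⟨e1, e2⟩ := tau_spec a (m b) (kk b) (rot_trans hab (hmrot b)) (hdcp b)
    have heq : A a ++ rv G (B a) = A b ++ rv G (B b) := by
      show (m a).take (kk a) ++ rv G ((m a).drop (kk a)) =
        (m b).take (kk b) ++ rv G ((m b).drop (kk b))
      rw [e1, e2]
    exact congrArg (Quot.mk rel) (Subtype.ext heq)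
  let τ : Quot rel → Quot rel := Quot.lift τf τresp
  have σmk : ∀ s, σ (Quot.mk rel s) = Quot.mk rel ⟨rv G s.1, ec_rv s.2⟩ := fun _ => rfl
  have τmk : ∀ s, τ (Quot.mk rel s) = Quot.mk rel ⟨A s ++ rv G (B s), hgec s⟩ := fun _ => rfl
  have mk_rot : ∀ s t : {l : List H // G.IsEulerCircuit l},
      (∃ n, t.1 = s.1.rotate n) → Quot.mk rel s = Quot.mk rel t :=
    fun s t h => Quot.sound h
  let E : Quot rel → Set H := Quot.lift (fun s => {x | x ∈ s.1}) (by
    rintro a b ⟨n, hab⟩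
    ext x
    simp [hab, List.mem_rotate])
  -- involution of σ
  have hσ : ∀ q, σ (σ q) = q := by
    apply Quot.ind
    intro s
    rw [σmk s, σmk ⟨rv G s.1, ec_rv s.2⟩]
    exact congrArg (Quot.mk rel) (Subtype.ext (rv_rv s.1))
  -- involution of τ
  have hτ : ∀ q, τ (τ q) = q := by
    apply Quot.ind
    intro s
    have hAlen : (A s).length = kk s := len_take_k (hdcp s)
    obtain ⟨e1, e2⟩ := tau_spec ⟨A s ++ rv G (B s), hgec s⟩ (A s ++ rv G (B s)) (kk s)
      ⟨0, (List.rotate_zero _).symm⟩ (glue_dcp (hmec s) (hdcp s))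
    have e3 : A ⟨A s ++ rv G (B s), hgec s⟩ = A s := by
      show (m ⟨A s ++ rv G (B s), hgec s⟩).take (kk ⟨A s ++ rv G (B s), hgec s⟩) = A s
      rw [e1, e2]
      exact List.take_left' hAlen
    have e4 : B ⟨A s ++ rv G (B s), hgec s⟩ = rv G (B s) := by
      show (m ⟨A s ++ rv G (B s), hgec s⟩).drop (kk ⟨A s ++ rv G (B s), hgec s⟩) = rv G (B s)
      rw [e1, e2]
      exact List.drop_left' hAlen
    have hfin : A ⟨A s ++ rv G (B s), hgec s⟩ ++ rv G (B ⟨A s ++ rv G (B s), hgec s⟩)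
        = m s := by
      rw [e3, e4, rv_rv]
      exact List.take_append_drop _ _
    rw [τmk s, τmk ⟨A s ++ rv G (B s), hgec s⟩]
    calc Quot.mk rel ⟨A ⟨A s ++ rv G (B s), hgec s⟩ ++ rv G (B ⟨A s ++ rv G (B s), hgec s⟩),
            hgec _⟩
        = Quot.mk rel ⟨m s, hmec s⟩ := congrArg (Quot.mk rel) (Subtype.ext hfin)
      _ = Quot.mk rel s := (mk_rot s ⟨m s, hmec s⟩ (hmrot s)).symm
  -- commutation
  have hcomm : ∀ q, σ (τ q) = τ (σ q) := by
    apply Quot.ind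
    intro s
    have hAlen : (rv G (A s)).length = kk s := by
      rw [length_rv]; exact len_take_k (hdcp s)
    have hL : rv G (A s ++ rv G (B s)) = B s ++ rv G (A s) := by
      rw [rv_append, rv_rv]
    have hrot' : ∃ n, rv G (A s) ++ rv G (B s) = (rv G s.1).rotate n := by
      obtain ⟨n0, hn0⟩ := hmrot s
      have h1 : ∃ n, rv G (m s) = (rv G s.1).rotate n := by
        rw [hn0]
        exact rv_rot s.1 n0
      have h2 : rv G (m s) = rv G (B s) ++ rv G (A s) := by
        conv_lhs => rw [show m s = A s ++ B s from (List.take_append_drop _ _).symm]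
        rw [rv_append]
      exact rot_trans h1 ⟨(rv G (B s)).length, by rw [h2, rotate_append_left]⟩
    obtain ⟨e1, e2⟩ := tau_spec ⟨rv G s.1, ec_rv s.2⟩ (rv G (A s) ++ rv G (B s)) (kk s)
      hrot' (rv_dcp (hmec s) (hdcp s))
    have e3 : A ⟨rv G s.1, ec_rv s.2⟩ = rv G (A s) := by
      show (m ⟨rv G s.1, ec_rv s.2⟩).take (kk ⟨rv G s.1, ec_rv s.2⟩) = rv G (A s)
      rw [e1, e2]
      exact List.take_left' hAlen
    have e4 : B ⟨rv G s.1, ec_rv s.2⟩ = rv G (B s) := by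
      show (m ⟨rv G s.1, ec_rv s.2⟩).drop (kk ⟨rv G s.1, ec_rv s.2⟩) = rv G (B s)
      rw [e1, e2]
      exact List.drop_left' hAlen
    have hfin : A ⟨rv G s.1, ec_rv s.2⟩ ++ rv G (B ⟨rv G s.1, ec_rv s.2⟩)
        = rv G (A s) ++ B s := by
      rw [e3, e4, rv_rv]
    rw [τmk s, σmk ⟨A s ++ rv G (B s), hgec s⟩, σmk s, τmk ⟨rv G s.1, ec_rv s.2⟩]
    calc Quot.mk rel ⟨rv G (A s ++ rv G (B s)), ec_rv (hgec s)⟩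
        = Quot.mk rel ⟨B s ++ rv G (A s), hL ▸ ec_rv (hgec s)⟩ :=
          congrArg (Quot.mk rel) (Subtype.ext hL)
      _ = Quot.mk rel ⟨rv G (A s) ++ B s, hfin ▸ hgec ⟨rv G s.1, ec_rv s.2⟩⟩ :=
          Quot.sound ⟨(B s).length, (rotate_append_left (B s) (rv G (A s))).symm⟩
      _ = Quot.mk rel ⟨A ⟨rv G s.1, ec_rv s.2⟩ ++ rv G (B ⟨rv G s.1, ec_rv s.2⟩),
            hgec ⟨rv G s.1, ec_rv s.2⟩⟩ := (congrArg (Quot.mk rel) (Subtype.ext hfin)).symm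
  -- freeness
  have hne1 : ∀ q, σ q ≠ q := by
    apply Quot.ind
    intro s heq
    obtain ⟨hne0, hnd0, hcmp0, hadj0⟩ := s.2
    rw [σmk s] at heq
    have hsets : ({x : H | x ∈ rv G s.1} : Set H) = {x : H | x ∈ s.1} := congrArg E heq
    have hx : s.1.head hne0 ∈ ({x : H | x ∈ s.1} : Set H) := List.head_mem hne0
    rw [← hsets] at hx
    have hx' : s.1.head hne0 ∈ rv G s.1 := hx
    rw [mem_rv] at hx'
    exact (hcmp0 _).mp (List.head_mem hne0) hx'
  have hne2 : ∀ q, τ q ≠ q := by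
    apply Quot.ind
    intro s heq
    obtain ⟨hne0, hnd0, hcmp0, hadj0⟩ := s.2
    rw [τmk s] at heq
    have hsets : ({x : H | x ∈ A s ++ rv G (B s)} : Set H) = {x : H | x ∈ s.1} :=
      congrArg E heq
    have hBne : B s ≠ [] := drop_ne_nil' (hdcp s).2.1
    have hw1 : G.θ ((B s).head hBne) ∈ A s ++ rv G (B s) := by
      apply List.mem_append_right
      rw [mem_rv, G.θ_invol]
      exact List.head_mem hBne
    have hhB : (B s).head hBne ∈ s.1 := by
      have h1 : (B s).head hBne ∈ m s := List.drop_subset _ _ (List.head_mem hBne)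
      obtain ⟨n0, hn0⟩ := hmrot s
      rw [hn0] at h1
      exact mem_rotate.mp h1
    have hw2 : G.θ ((B s).head hBne) ∉ s.1 := (hcmp0 _).mp hhB
    have hmem : G.θ ((B s).head hBne) ∈ ({x : H | x ∈ s.1} : Set H) := by
      rw [← hsets]
      exact hw1
    exact hw2 hmem
  have hne3 : ∀ q, σ (τ q) ≠ q := by
    apply Quot.ind
    intro s heq
    obtain ⟨hne0, hnd0, hcmp0, hadj0⟩ := s.2
    rw [τmk s, σmk ⟨A s ++ rv G (B s), hgec s⟩] at heq
    have hsets : ({x : H | x ∈ rv G (A s ++ rv G (B s))} : Set H) = {x : H | x ∈ s.1} :=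
      congrArg E heq
    have hAne : A s ≠ [] := take_ne_nil' (hdcp s).1 (hdcp s).2.1
    have hw1 : G.θ ((A s).head hAne) ∈ rv G (A s ++ rv G (B s)) := by
      rw [mem_rv, G.θ_invol]
      exact List.mem_append_left _ (List.head_mem hAne)
    have hhA : (A s).head hAne ∈ s.1 := by
      have h1 : (A s).head hAne ∈ m s := List.take_subset _ _ (List.head_mem hAne)
      obtain ⟨n0, hn0⟩ := hmrot s
      rw [hn0] at h1
      exact mem_rotate.mp h1
    have hw2 : G.θ ((A s).head hAne) ∉ s.1 := (hcmp0 _).mp hhA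
    have hmem : G.θ ((A s).head hAne) ∈ ({x : H | x ∈ s.1} : Set H) := by
      rw [← hsets]
      exact hw1
    exact hw2 hmem
  exact four_dvd_card σ τ hσ hτ hcomm hne1 hne2 hne3
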